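/- Let S, T be commuting Borel automorphisms of a standard Borel space X generating a free Borel ℤ²-action. Then for each pair (n, m) of positive integers there exists a Borel set A such that A is a complete section for the ℤ²-action, its complement is also a complete section, and the sets S^i T^j A for 0 ≤ i < n, 0 ≤ j < m are pairwise disjoint. -/

import Mathlib

open MeasureTheory Set

/-- weak Rokhlin Lemma for a free Borel ℤ²-action generated by
commuting `S`, `T`: for each `(n, m)` there is a Borel set `A` which is a complete
section with complete-section complement, whose translates `S^i T^j A`
(`0 ≤ i < n`, `0 ≤ j < m`) are pairwise disjoint. -/
theorem stmt8 {X : Type*} [MeasurableSpace X] [StandardBorelSpace X]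
    (S T : Equiv.Perm X) (hS : Measurable S) (hS' : Measurable S.symm)
    (hT : Measurable T) (hT' : Measurable T.symm)
    (hcomm : Commute S T)
    (hfree : ∀ (n m : ℤ) (x : X), ((S ^ n) * (T ^ m)) x = x → n = 0 ∧ m = 0)
    (n m : ℕ) (hn : 0 < n) (hm : 0 < m) :
    ∃ A : Set X, MeasurableSet A ∧
      (∀ x : X, ∃ i j : ℤ, ((S ^ i) * (T ^ j)) x ∈ A) ∧
      (∀ x : X, ∃ i j : ℤ, ((S ^ i) * (T ^ j)) x ∉ A) ∧
      (∀ i j i' j' : ℕ, i < n → j < m → i' < n → j' < m → (i, j) ≠ (i', j') →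
        Disjoint ((fun x => (S ^ i) ((T ^ j) x)) '' A)
          ((fun x => (S ^ i') ((T ^ j') x)) '' A)) := by
  classical
  -- the ℤ²-action
  let act : ℤ × ℤ → Equiv.Perm X := fun d => S ^ d.1 * T ^ d.2
  have act_def : ∀ d : ℤ × ℤ, act d = S ^ d.1 * T ^ d.2 := fun _ => rfl
  have act_mul : ∀ d e : ℤ × ℤ, act (d + e) = act d * act e := by
    intro d e
    simp only [act_def, Prod.fst_add, Prod.snd_add, zpow_add]
    exact ((hcomm.symm.zpow_zpow d.2 e.1).mul_mul_mul_comm (S ^ d.1) (T ^ e.2)).symm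
  have act_zero : act 0 = 1 := by simp [act_def]
  have act_apply_apply : ∀ d e (x : X), act d (act e x) = act (d + e) x := by
    intro d e x; rw [act_mul]; rfl
  -- measurability of the action maps
  have hzp : ∀ (U : Equiv.Perm X), Measurable U → Measurable U.symm →
      ∀ i : ℤ, Measurable ⇑(U ^ i) := by
    intro U hU hU' i
    induction i using Int.induction_on with
    | zero => simpa using measurable_id
    | succ k ih =>
        have h : (U ^ ((k : ℤ) + 1)) = U ^ (k : ℤ) * U := by rw [zpow_add_one]
        have h2 : ⇑(U ^ (k : ℤ) * U) = ⇑(U ^ (k : ℤ)) ∘ ⇑U := rfl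
        rw [h, h2]; exact ih.comp hU
    | pred k ih =>
        have h : (U ^ (-(k : ℤ) - 1)) = U ^ (-(k : ℤ)) * U⁻¹ := by rw [zpow_sub_one]
        have h2 : ⇑(U ^ (-(k : ℤ)) * U⁻¹) = ⇑(U ^ (-(k : ℤ))) ∘ ⇑(U.symm) := by
          rw [← Equiv.Perm.inv_def]; rfl
        rw [h, h2]; exact ih.comp hU'
  have act_meas : ∀ d : ℤ × ℤ, Measurable fun x => act d x := by
    intro d
    have h : (fun x => act d x) = fun x => (S ^ d.1) ((T ^ d.2) x) := by
      funext x; rw [act_def, Equiv.Perm.mul_apply]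
    rw [h]; exact (hzp S hS hS' d.1).comp (hzp T hT hT' d.2)
  -- freeness
  have act_free : ∀ d : ℤ × ℤ, d ≠ 0 → ∀ x : X, act d x ≠ x := by
    intro d hd x h
    rw [act_def] at h
    have := hfree d.1 d.2 x h
    exact hd (Prod.ext this.1 this.2)
  -- the finite symmetric set of "differences"
  let D : Finset (ℤ × ℤ) := ((Finset.Icc (-(n : ℤ)) n) ×ˢ (Finset.Icc (-(m : ℤ)) m)).erase 0
  have hD : ∀ d : ℤ × ℤ,
      d ∈ D ↔ d ≠ 0 ∧ -(n : ℤ) ≤ d.1 ∧ d.1 ≤ n ∧ -(m : ℤ) ≤ d.2 ∧ d.2 ≤ m := by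
    intro d
    simp [D, Finset.mem_erase, Finset.mem_product, Finset.mem_Icc, and_assoc]
  have hDsymm : ∀ d ∈ D, -d ∈ D := by
    intro d hd
    rw [hD] at hd ⊢
    refine ⟨neg_ne_zero.2 hd.1, ?_⟩
    have := hd.2
    simp only [Prod.fst_neg, Prod.snd_neg]
    omega
  have hSD : ((1 : ℤ), (0 : ℤ)) ∈ D := by
    rw [hD]
    refine ⟨by simp, by simp; omega⟩
  -- a separating family of Borel sets
  obtain ⟨f, hf⟩ := MeasureTheory.exists_measurableEmbedding_real X
  obtain ⟨qe, hqe⟩ := exists_surjective_nat (ℚ × Bool)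
  let B : ℕ → Set X := fun k =>
    if (qe k).2 then f ⁻¹' Iio ((qe k).1 : ℝ) else (f ⁻¹' Iio ((qe k).1 : ℝ))ᶜ
  have hBmeas : ∀ k, MeasurableSet (B k) := by
    intro k
    dsimp only [B]
    split
    · exact hf.measurable measurableSet_Iio
    · exact (hf.measurable measurableSet_Iio).compl
  have hBsep : ∀ x y : X, x ≠ y → ∃ k, x ∈ B k ∧ y ∉ B k := by
    intro x y hxy
    have hfxy : f x ≠ f y := fun h => hxy (hf.injective h)
    rcases hfxy.lt_or_gt with h | h
    · obtain ⟨q, hq1, hq2⟩ := exists_rat_btwn h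
      obtain ⟨k, hk⟩ := hqe (q, true)
      refine ⟨k, ?_, ?_⟩ <;> simp [B, hk]
      · exact hq1
      · exact hq2.le
    · obtain ⟨q, hq1, hq2⟩ := exists_rat_btwn h
      obtain ⟨k, hk⟩ := hqe (q, false)
      refine ⟨k, ?_, ?_⟩ <;> simp [B, hk]
      · exact hq2.le
      · exact hq1
  -- the coloring
  have sep_ex : ∀ (x : X) (d : {d // d ∈ D}), ∃ k, x ∈ B k ∧ act ↑d x ∉ B k := by
    intro x d
    have hne : act ↑d x ≠ x := act_free _ ((hD _).1 d.2).1 x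
    exact hBsep x (act ↑d x) hne.symm
  let tup : X → ({d // d ∈ D} → ℕ) := fun x d => Nat.find (sep_ex x d)
  have tup_spec : ∀ x d, x ∈ B (tup x d) ∧ act ↑d x ∉ B (tup x d) :=
    fun x d => Nat.find_spec (sep_ex x d)
  obtain ⟨ge, hge⟩ := exists_surjective_nat ({d // d ∈ D} → ℕ)
  let C : ℕ → Set X := fun c => {x | tup x = ge c}
  have hCmeas : ∀ c, MeasurableSet (C c) := by
    intro c
    have h1 : ∀ (d : {d // d ∈ D}) (j : ℕ), MeasurableSet {x | x ∈ B j ∧ act ↑d x ∉ B j} :=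
      fun d j => (hBmeas j).inter ((act_meas ↑d) (hBmeas j).compl)
    have h2 : C c = ⋂ d : {d // d ∈ D},
        ({x | x ∈ B (ge c d) ∧ act ↑d x ∉ B (ge c d)} ∩
          ⋂ j, ⋂ (_ : j < ge c d), {x | x ∈ B j ∧ act ↑d x ∉ B j}ᶜ) := by
      ext x
      simp only [C, mem_setOf_eq, mem_iInter, mem_inter_iff, mem_compl_iff, funext_iff]
      constructor
      · intro h d
        have := (Nat.find_eq_iff (sep_ex x d)).1 (h d)
        exact ⟨this.1, fun j hj => this.2 j hj⟩
      · intro h d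
        exact (Nat.find_eq_iff (sep_ex x d)).2 ⟨(h d).1, fun j hj => (h d).2 j hj⟩
    rw [h2]
    exact MeasurableSet.iInter fun d =>
      (h1 d _).inter (MeasurableSet.iInter fun j =>
        MeasurableSet.iInter fun _ => (h1 d j).compl)
  have hCcover : ∀ x : X, ∃ c, x ∈ C c := by
    intro x
    obtain ⟨c, hc⟩ := hge (tup x)
    exact ⟨c, hc.symm⟩
  -- neighbourhood operation and greedy construction
  let N : Set X → Set X := fun Bs => ⋃ d : {d // d ∈ D}, (fun x => act ↑d x) ⁻¹' Bs
  have hNmeas : ∀ Bs, MeasurableSet Bs → MeasurableSet (N Bs) :=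
    fun Bs h => MeasurableSet.iUnion fun d => (act_meas ↑d) h
  have hNmem : ∀ (Bs : Set X) (x : X), x ∈ N Bs ↔ ∃ d : {d // d ∈ D}, act ↑d x ∈ Bs := by
    intro Bs x; simp [N]
  let U : ℕ → Set X := fun k => Nat.rec ∅ (fun k Uk => Uk ∪ (C k \ N Uk)) k
  have hU0 : U 0 = ∅ := rfl
  have hUs : ∀ k, U (k + 1) = U k ∪ (C k \ N (U k)) := fun _ => rfl
  have hUmeas : ∀ k, MeasurableSet (U k) := by
    intro k
    induction k with
    | zero => rw [hU0]; exact MeasurableSet.empty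
    | succ k ih => rw [hUs]; exact ih.union ((hCmeas k).diff (hNmeas _ ih))
  have hUmono : Monotone U := monotone_nat_of_le_succ fun k => by
    rw [hUs]; exact subset_union_left
  let A : Set X := ⋃ k, U k
  have hAmeas : MeasurableSet A := MeasurableSet.iUnion hUmeas
  have hAmem : ∀ x : X, x ∈ A ↔ ∃ k, x ∈ U k := fun x => mem_iUnion
  -- independence
  have key : ∀ k, ∀ d ∈ D, ∀ x : X, x ∈ U k → act d x ∈ U k → False := by
    intro k
    induction k with
    | zero => intro d hd x hx _; rw [hU0] at hx; exact absurd hx (notMem_empty x)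
    | succ k ih =>
      intro d hd x hx hy
      rw [hUs] at hx hy
      rcases hx with hx | hx <;> rcases hy with hy | hy
      · exact ih d hd x hx hy
      · refine hy.2 ((hNmem _ _).2 ⟨⟨-d, hDsymm d hd⟩, ?_⟩)
        have hxx : act (-d) (act d x) = x := by
          rw [act_apply_apply, neg_add_cancel, act_zero, Equiv.Perm.one_apply]
        show act (-d) (act d x) ∈ U k
        rw [hxx]; exact hx
      · exact hx.2 ((hNmem _ _).2 ⟨⟨d, hd⟩, hy⟩)
      · have hxc : tup x = ge k := hx.1
        have hyc : tup (act d x) = ge k := hy.1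
        have h1 := tup_spec x ⟨d, hd⟩
        have h2 := tup_spec (act d x) ⟨d, hd⟩
        rw [hxc] at h1
        rw [hyc] at h2
        exact h1.2 h2.1
  have hindep : ∀ d ∈ D, ∀ x : X, x ∈ A → act d x ∈ A → False := by
    intro d hd x hx hy
    rw [hAmem] at hx hy
    obtain ⟨k, hk⟩ := hx
    obtain ⟨l, hl⟩ := hy
    exact key (max k l) d hd x (hUmono (le_max_left k l) hk) (hUmono (le_max_right k l) hl)
  have hmax : ∀ x : X, x ∈ A ∨ ∃ d ∈ D, act d x ∈ A := by
    intro x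
    obtain ⟨c, hc⟩ := hCcover x
    by_cases hN : x ∈ N (U c)
    · obtain ⟨d, hd⟩ := (hNmem _ x).1 hN
      exact Or.inr ⟨↑d, d.2, (hAmem _).2 ⟨c, hd⟩⟩
    · exact Or.inl ((hAmem x).2 ⟨c + 1, by rw [hUs]; exact Or.inr ⟨hc, hN⟩⟩)
  refine ⟨A, hAmeas, ?_, ?_, ?_⟩
  · -- complete section
    intro x
    rcases hmax x with h | ⟨d, hd, h⟩
    · refine ⟨0, 0, ?_⟩
      simpa using h
    · exact ⟨d.1, d.2, h⟩
  · -- complement is a complete section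
    intro x
    by_cases hx : x ∈ A
    · refine ⟨1, 0, fun h => hindep ((1 : ℤ), (0 : ℤ)) hSD x hx h⟩
    · refine ⟨0, 0, ?_⟩
      simpa using hx
  · -- disjointness
    intro i j i' j' hi hj hi' hj' hne
    rw [Set.disjoint_left]
    rintro z ⟨a, ha, rfl⟩ ⟨b, hb, hz⟩
    have cast1 : ∀ (p q : ℕ) (x : X), (S ^ p) ((T ^ q) x) = act ((p : ℤ), (q : ℤ)) x := by
      intro p q x
      rw [act_def, Equiv.Perm.mul_apply]
      norm_cast
    simp only [cast1] at hz
    have hb' : act ((i : ℤ) - i', (j : ℤ) - j') a = b := by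
      have h0 : act (-(i' : ℤ), -(j' : ℤ)) (act ((i' : ℤ), (j' : ℤ)) b)
          = act (-(i' : ℤ), -(j' : ℤ)) (act ((i : ℤ), (j : ℤ)) a) := congrArg _ hz
      rw [act_apply_apply, act_apply_apply] at h0
      have e0 : ((-(i' : ℤ), -(j' : ℤ)) : ℤ × ℤ) + ((i' : ℤ), (j' : ℤ)) = 0 := by
        simp [Prod.ext_iff]
      have e1 : ((-(i' : ℤ), -(j' : ℤ)) : ℤ × ℤ) + ((i : ℤ), (j : ℤ)) =
          ((i : ℤ) - i', (j : ℤ) - j') := by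
        simp [Prod.ext_iff]; constructor <;> ring
      rw [e0, e1, act_zero, Equiv.Perm.one_apply] at h0
      exact h0.symm
    have hdD : (((i : ℤ) - i', (j : ℤ) - j') : ℤ × ℤ) ∈ D := by
      rw [hD]
      constructor
      · intro h
        apply hne
        have h1 : (i : ℤ) - i' = 0 := congrArg Prod.fst h
        have h2 : (j : ℤ) - j' = 0 := congrArg Prod.snd h
        have h3 : i = i' := by omega
        have h4 : j = j' := by omega
        rw [h3, h4]
      · dsimp only
        omega
    exact hindep _ hdD a ha (hb' ▸ hb)
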